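/- Let ε > 0, s ∈ (0, π/2), θ ∈ ℝ, and a, b ∈ ℝ with a² + b² < 1/(ε² sin 2s), and let y = T(s, θ, a, b). Then dist(y, Γ_ε) = √(a² + b²), and the distance is attained at the base point ((cos s/(ε√(sin 2s))) e^{iθ}, (sin s/(ε√(sin 2s))) e^{iθ}) ∈ Γ_ε. -/

import Mathlib

/- STATEMENT 11: if a² + b² < 1/(ε² sin 2s) then dist(T(s,θ,a,b), Γ_ε) = √(a²+b²), attained at the base point. -/

noncomputable section

open Complex Metric
open scoped Real

/-- ℂ² with the Euclidean (ℝ⁴) distance. -/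
abbrev C2 : Type := EuclideanSpace ℂ (Fin 2)

/-- The point (z, w) ∈ ℂ². -/
def pt (z w : ℂ) : C2 := (WithLp.equiv 2 (Fin 2 → ℂ)).symm ![z, w]

/-- The point of Γ with parameters (ρ, θ). -/
def gpt (ρ θ : ℝ) : C2 :=
  pt (((Real.sqrt 2 / 2 * ρ : ℝ) : ℂ) * Complex.exp ((θ : ℂ) * Complex.I))
     (((Real.sqrt 2 / 2 * ρ⁻¹ : ℝ) : ℂ) * Complex.exp ((θ : ℂ) * Complex.I))

/-- The special Lagrangian surface Γ ⊂ ℂ². -/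
def Gam : Set C2 := {p | ∃ ρ θ : ℝ, 0 < ρ ∧ p = gpt ρ θ}

/-- The point (ρ₁ e^{iθ₁}, ρ₂ e^{iθ₂}) ∈ ℂ². -/
def ppt (ρ₁ θ₁ ρ₂ θ₂ : ℝ) : C2 :=
  pt ((ρ₁ : ℂ) * Complex.exp ((θ₁ : ℂ) * Complex.I))
     ((ρ₂ : ℂ) * Complex.exp ((θ₂ : ℂ) * Complex.I))

/-- The point of Γ_ε with parameters (s, θ). -/
def gept (ε s θ : ℝ) : C2 :=
  pt (((Real.cos s / (ε * Real.sqrt (Real.sin (2 * s))) : ℝ) : ℂ)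
        * Complex.exp ((θ : ℂ) * Complex.I))
     (((Real.sin s / (ε * Real.sqrt (Real.sin (2 * s))) : ℝ) : ℂ)
        * Complex.exp ((θ : ℂ) * Complex.I))

/-- The rescaled surface Γ_ε = (1/ε)Γ. -/
def GamE (ε : ℝ) : Set C2 := {p | ∃ s θ : ℝ, s ∈ Set.Ioo 0 (π / 2) ∧ p = gept ε s θ}

/-- The Fermi (normal exponential) map around Γ_ε. -/
def fermiT (ε s θ a b : ℝ) : C2 :=
  pt (Complex.exp ((θ : ℂ) * Complex.I)
        * (((Real.cos s / (ε * Real.sqrt (Real.sin (2 * s))) : ℝ) : ℂ)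
            + ((a : ℂ) - (b : ℂ) * Complex.I) * ((Real.sin s : ℝ) : ℂ)))
     (Complex.exp ((θ : ℂ) * Complex.I)
        * (((Real.sin s / (ε * Real.sqrt (Real.sin (2 * s))) : ℝ) : ℂ)
            + ((a : ℂ) + (b : ℂ) * Complex.I) * ((Real.cos s : ℝ) : ℂ)))

lemma dist_pt (z w z' w' : ℂ) :
    dist (pt z w) (pt z' w')
      = Real.sqrt (‖z - z'‖ ^ 2 + ‖w - w'‖ ^ 2) := by
  rw [EuclideanSpace.dist_eq]
  simp [pt, Fin.sum_univ_two, Complex.dist_eq]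

set_option maxHeartbeats 1000000 in
lemma master (R R' a b c σ c' σ' cθ sθ cθ' sθ' : ℝ)
    (hC : c^2 + σ^2 = 1) (hC' : c'^2 + σ'^2 = 1)
    (hθ : cθ^2 + sθ^2 = 1) (hθ' : cθ'^2 + sθ'^2 = 1)
    (hK : R'^2 * (c' * σ') = R^2 * (c * σ))
    (hR : 0 < R) (hR' : 0 < R') (hc : 0 < c) (hσ : 0 < σ)
    (hc' : 0 < c') (hσ' : 0 < σ') (hab : a^2 + b^2 < R^2) :
    a^2 + b^2 ≤
      ((R*c + a*σ)*cθ + (b*σ)*sθ - (R'*c')*cθ')^2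
      + ((R*c + a*σ)*sθ - (b*σ)*cθ - (R'*c')*sθ')^2
      + ((R*σ + a*c)*cθ - (b*c)*sθ - (R'*σ')*cθ')^2
      + ((R*σ + a*c)*sθ + (b*c)*cθ - (R'*σ')*sθ')^2 := by
  have hφ : (cθ*cθ' + sθ*sθ')^2 + (sθ*cθ' - cθ*sθ')^2 = 1 := by
    linear_combination (cθ'^2 + sθ'^2) * hθ + hθ'
  have haR : a^2 < R^2 := by nlinarith [sq_nonneg b]
  have ha : -R < a := by nlinarith [haR, hR]
  have hLid : R^2 + R'^2 + 4*a*R*c*σ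
      = 4*(R*c*σ)*(R+a) + R^2*(c-σ)^2 + R'^2*(c'-σ')^2 := by
    linear_combination (-(R^2)) * hC + (-(R'^2)) * hC' + 2 * hK
  have hL : 0 ≤ R^2 + R'^2 + 4*a*R*c*σ := by
    have p1 : 0 < 4*(R*c*σ)*(R+a) :=
      mul_pos (by positivity) (by linarith)
    have p2 : 0 ≤ R^2*(c-σ)^2 := by positivity
    have p3 : 0 ≤ R'^2*(c'-σ')^2 := by positivity
    linarith [hLid]
  have hId : (R^2 + R'^2 + 4*a*R*c*σ)^2
      - 4*R'^2*((R*(c*c'+σ*σ') + a*(σ*c'+c*σ'))^2 + b^2*(σ*c'-c*σ')^2)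
      = (R^2 - R'^2)^2 + 4*R'^2*(σ*c'-c*σ')^2*(R^2 - a^2 - b^2) := by
    linear_combination (-4*R^2*R'^2*(c'^2+σ'^2) - 8*a*R*R'^2*(c'*σ')) * hC
      + (-4*R^2*R'^2 - 8*a*R*R'^2*(c*σ)) * hC'
      + (-16*a^2*(c*σ) - 8*a*R) * hK
  have hQ : 4*R'^2*((R*(c*c'+σ*σ') + a*(σ*c'+c*σ'))^2 + b^2*(σ*c'-c*σ')^2)
      ≤ (R^2 + R'^2 + 4*a*R*c*σ)^2 := by
    have n1 : 0 ≤ (R^2 - R'^2)^2 := sq_nonneg _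
    have n2 : 0 ≤ 4*R'^2*(σ*c'-c*σ')^2*(R^2 - a^2 - b^2) :=
      mul_nonneg (by positivity) (by linarith [sq_nonneg b])
    linarith [hId]
  have h1 : (4*R'^2) * (((cθ*cθ'+sθ*sθ') * (R*(c*c'+σ*σ') + a*(σ*c'+c*σ'))
        + (sθ*cθ'-cθ*sθ') * (b*(σ*c'-c*σ')))^2)
      = (4*R'^2) * ((R*(c*c'+σ*σ') + a*(σ*c'+c*σ'))^2 + (b*(σ*c'-c*σ'))^2)
        - (4*R'^2) * (((sθ*cθ'-cθ*sθ') * (R*(c*c'+σ*σ') + a*(σ*c'+c*σ'))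
            - (cθ*cθ'+sθ*sθ') * (b*(σ*c'-c*σ')))^2) := by
    linear_combination (4*R'^2) * ((R*(c*c'+σ*σ') + a*(σ*c'+c*σ'))^2 + (b*(σ*c'-c*σ'))^2) * hφ
  have h2 : (2*R'*((cθ*cθ'+sθ*sθ') * (R*(c*c'+σ*σ') + a*(σ*c'+c*σ'))
        + (sθ*cθ'-cθ*sθ') * (b*(σ*c'-c*σ'))))^2 ≤ (R^2 + R'^2 + 4*a*R*c*σ)^2 := by
    have n3 : 0 ≤ (4*R'^2) * (((sθ*cθ'-cθ*sθ') * (R*(c*c'+σ*σ') + a*(σ*c'+c*σ'))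
            - (cθ*cθ'+sθ*sθ') * (b*(σ*c'-c*σ')))^2) := by positivity
    have e : (2*R'*((cθ*cθ'+sθ*sθ') * (R*(c*c'+σ*σ') + a*(σ*c'+c*σ'))
        + (sθ*cθ'-cθ*sθ') * (b*(σ*c'-c*σ'))))^2
        = (4*R'^2) * (((cθ*cθ'+sθ*sθ') * (R*(c*c'+σ*σ') + a*(σ*c'+c*σ'))
        + (sθ*cθ'-cθ*sθ') * (b*(σ*c'-c*σ')))^2) := by ring
    linarith [h1, hQ, n3, e]
  have hRHS : 2*R'*((cθ*cθ'+sθ*sθ') * (R*(c*c'+σ*σ') + a*(σ*c'+c*σ'))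
        + (sθ*cθ'-cθ*sθ') * (b*(σ*c'-c*σ'))) ≤ R^2 + R'^2 + 4*a*R*c*σ := by
    have h3 := Real.sqrt_le_sqrt h2
    rw [Real.sqrt_sq_eq_abs, Real.sqrt_sq_eq_abs] at h3
    calc 2*R'*((cθ*cθ'+sθ*sθ') * (R*(c*c'+σ*σ') + a*(σ*c'+c*σ'))
        + (sθ*cθ'-cθ*sθ') * (b*(σ*c'-c*σ')))
        ≤ |2*R'*((cθ*cθ'+sθ*sθ') * (R*(c*c'+σ*σ') + a*(σ*c'+c*σ'))
          + (sθ*cθ'-cθ*sθ') * (b*(σ*c'-c*σ')))| := le_abs_self _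
      _ ≤ |R^2 + R'^2 + 4*a*R*c*σ| := h3
      _ = R^2 + R'^2 + 4*a*R*c*σ := abs_of_nonneg hL
  have hfinal : ((R*c + a*σ)*cθ + (b*σ)*sθ - (R'*c')*cθ')^2
      + ((R*c + a*σ)*sθ - (b*σ)*cθ - (R'*c')*sθ')^2
      + ((R*σ + a*c)*cθ - (b*c)*sθ - (R'*σ')*cθ')^2
      + ((R*σ + a*c)*sθ + (b*c)*cθ - (R'*σ')*sθ')^2 - (a^2 + b^2)
      = (R^2 + R'^2 + 4*a*R*c*σ)
        - 2*R'*((cθ*cθ'+sθ*sθ') * (R*(c*c'+σ*σ') + a*(σ*c'+c*σ'))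
          + (sθ*cθ'-cθ*sθ') * (b*(σ*c'-c*σ'))) := by
    linear_combination ((R^2+a^2+b^2)*(c^2+σ^2) + 4*a*R*c*σ) * hθ
      + (R^2+a^2+b^2) * hC + (R'^2*(c'^2+σ'^2)) * hθ' + R'^2 * hC'
  linarith

lemma sin_two_pos {s : ℝ} (hs : s ∈ Set.Ioo 0 (π / 2)) : 0 < Real.sin (2*s) :=
  Real.sin_pos_of_pos_of_lt_pi (by linarith [hs.1]) (by linarith [hs.2])

lemma Rsq_mul {ε s : ℝ} (hε : 0 < ε) (hs : s ∈ Set.Ioo 0 (π / 2)) :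
    ((ε * Real.sqrt (Real.sin (2*s)))⁻¹)^2 * (Real.cos s * Real.sin s) = 1/(2*ε^2) := by
  have h2 : 0 < Real.sin (2*s) := sin_two_pos hs
  have hsq : Real.sqrt (Real.sin (2*s)) ^ 2 = Real.sin (2*s) := Real.sq_sqrt h2.le
  have hd : Real.sin (2*s) = 2 * Real.sin s * Real.cos s := Real.sin_two_mul s
  have hne : Real.sqrt (Real.sin (2*s)) ≠ 0 := by positivity
  field_simp
  nlinarith [hsq, hd]

set_option maxHeartbeats 2000000 in
theorem fermi_dist_eq (ε s θ a b : ℝ) (hε : 0 < ε) (hs : s ∈ Set.Ioo 0 (π / 2))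
    (hab : a ^ 2 + b ^ 2 < 1 / (ε ^ 2 * Real.sin (2 * s))) :
    Metric.infDist (fermiT ε s θ a b) (GamE ε) = Real.sqrt (a ^ 2 + b ^ 2) ∧
    dist (fermiT ε s θ a b) (gept ε s θ)
      = Metric.infDist (fermiT ε s θ a b) (GamE ε) := by
  have h2s : 0 < Real.sin (2*s) := sin_two_pos hs
  have hc : 0 < Real.cos s := Real.cos_pos_of_mem_Ioo ⟨by linarith [hs.1, Real.pi_pos], hs.2⟩
  have hσ : 0 < Real.sin s := Real.sin_pos_of_pos_of_lt_pi hs.1 (by linarith [hs.2, Real.pi_pos])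
  have hR : 0 < (ε * Real.sqrt (Real.sin (2*s)))⁻¹ := by positivity
  have hRsq : ((ε * Real.sqrt (Real.sin (2*s)))⁻¹)^2 = 1/(ε^2 * Real.sin (2*s)) := by
    rw [mul_inv, mul_pow, ← Real.sqrt_inv]
    rw [Real.sq_sqrt (by positivity)]
    field_simp
  have hab' : a^2 + b^2 < ((ε * Real.sqrt (Real.sin (2*s)))⁻¹)^2 := by
    rw [hRsq]; exact hab
  -- distance to the base point
  have hbase : dist (fermiT ε s θ a b) (gept ε s θ) = Real.sqrt (a^2 + b^2) := by
    rw [fermiT, gept, dist_pt]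
    congr 1
    rw [Complex.sq_norm, Complex.sq_norm, Complex.normSq_apply, Complex.normSq_apply]
    simp only [Complex.sub_re, Complex.sub_im, Complex.add_re, Complex.add_im,
      Complex.mul_re, Complex.mul_im, Complex.ofReal_re, Complex.ofReal_im,
      Complex.I_re, Complex.I_im, Complex.exp_ofReal_mul_I_re, Complex.exp_ofReal_mul_I_im,
      mul_zero, zero_mul, mul_one, sub_zero, zero_sub, add_zero, zero_add, neg_zero]
    linear_combination ((a^2+b^2)*(Real.cos s^2 + Real.sin s^2)) * Real.sin_sq_add_cos_sq θ
      + (a^2+b^2) * Real.sin_sq_add_cos_sq s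
  -- lower bound for every point of the surface
  have hlb : ∀ y ∈ GamE ε, Real.sqrt (a^2+b^2) ≤ dist (fermiT ε s θ a b) y := by
    rintro y ⟨s', θ', hs', rfl⟩
    have h2s' : 0 < Real.sin (2*s') := sin_two_pos hs'
    have hc' : 0 < Real.cos s' :=
      Real.cos_pos_of_mem_Ioo ⟨by linarith [hs'.1, Real.pi_pos], hs'.2⟩
    have hσ' : 0 < Real.sin s' :=
      Real.sin_pos_of_pos_of_lt_pi hs'.1 (by linarith [hs'.2, Real.pi_pos])
    have hR' : 0 < (ε * Real.sqrt (Real.sin (2*s')))⁻¹ := by positivity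
    have hK : ((ε * Real.sqrt (Real.sin (2*s')))⁻¹)^2 * (Real.cos s' * Real.sin s')
        = ((ε * Real.sqrt (Real.sin (2*s)))⁻¹)^2 * (Real.cos s * Real.sin s) := by
      rw [Rsq_mul hε hs, Rsq_mul hε hs']
    have hm := master ((ε * Real.sqrt (Real.sin (2*s)))⁻¹) ((ε * Real.sqrt (Real.sin (2*s')))⁻¹)
      a b (Real.cos s) (Real.sin s) (Real.cos s') (Real.sin s')
      (Real.cos θ) (Real.sin θ) (Real.cos θ') (Real.sin θ')
      (Real.cos_sq_add_sin_sq s) (Real.cos_sq_add_sin_sq s')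
      (Real.cos_sq_add_sin_sq θ) (Real.cos_sq_add_sin_sq θ')
      hK hR hR' hc hσ hc' hσ' hab'
    rw [fermiT, gept, dist_pt]
    apply Real.sqrt_le_sqrt
    rw [Complex.sq_norm, Complex.sq_norm, Complex.normSq_apply, Complex.normSq_apply]
    simp only [Complex.sub_re, Complex.sub_im, Complex.add_re, Complex.add_im,
      Complex.mul_re, Complex.mul_im, Complex.ofReal_re, Complex.ofReal_im,
      Complex.I_re, Complex.I_im, Complex.exp_ofReal_mul_I_re, Complex.exp_ofReal_mul_I_im,
      mul_zero, zero_mul, mul_one, sub_zero, zero_sub, add_zero, zero_add, neg_zero]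
    have hdiv : ∀ t u : ℝ, t / (ε * Real.sqrt (Real.sin (2*u)))
        = (ε * Real.sqrt (Real.sin (2*u)))⁻¹ * t := fun t u => by rw [div_eq_mul_inv, mul_comm]
    rw [hdiv (Real.cos s) s, hdiv (Real.sin s) s, hdiv (Real.cos s') s', hdiv (Real.sin s') s']
    linarith [hm]
  have hmem : gept ε s θ ∈ GamE ε := ⟨s, θ, hs, rfl⟩
  have hne : (GamE ε).Nonempty := ⟨gept ε s θ, hmem⟩
  have hle : Metric.infDist (fermiT ε s θ a b) (GamE ε) ≤ Real.sqrt (a^2+b^2) := by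
    rw [← hbase]; exact Metric.infDist_le_dist_of_mem hmem
  have hge : Real.sqrt (a^2+b^2) ≤ Metric.infDist (fermiT ε s θ a b) (GamE ε) := by
    by_contra h
    push_neg at h
    obtain ⟨y, hy, hlt⟩ := (Metric.infDist_lt_iff hne).1 h
    exact absurd hlt (not_lt.2 (hlb y hy))
  have heq : Metric.infDist (fermiT ε s θ a b) (GamE ε) = Real.sqrt (a^2+b^2) :=
    le_antisymm hle hge
  exact ⟨heq, by rw [heq, hbase]⟩

end
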